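/- For every n ≥ 2, Shannon entropy μ, regarded as a map from (Δⁿ, ⊑) to [0,∞)*, is a measurement: (i) it is Scott continuous (x ⊑ y implies μy ≤ μx, and μ(⊔S) = inf μ(S) for every directed S ⊆ Δⁿ); (ii) μx = 0 if and only if x is a maximal element of (Δⁿ, ⊑) (i.e. a pure state); (iii) μ measures the content of every pure state: for every pure x ∈ Δⁿ and every Scott-open U ⊆ Δⁿ with x ∈ U there is ε > 0 such that {y ∈ Δⁿ : y ⊑ x and μy < ε} ⊆ U. -/

import Mathlib

open Finset Real


/-- Δⁿ : classical n-states. -/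
def IsClassicalState (n : ℕ) (x : Fin n → ℝ) : Prop :=
  (∀ i, 0 ≤ x i) ∧ ∑ i, x i = 1

def ClState (n : ℕ) := {x : Fin n → ℝ // IsClassicalState n x}

/-- The Bayesian order (symmetric characterization). -/
def bayesLE {n : ℕ} (x y : Fin n → ℝ) : Prop :=
  ∃ σ : Equiv.Perm (Fin n),
    Antitone (fun i => x (σ i)) ∧ Antitone (fun i => y (σ i)) ∧
    ∀ i j : Fin n, (i : ℕ) + 1 = (j : ℕ) →
      x (σ i) * y (σ j) ≤ x (σ j) * y (σ i)

def clLE {n : ℕ} (x y : ClState n) : Prop := bayesLE x.val y.val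

/-- `a` is the supremum (least upper bound) of `S` with respect to `le`. -/
def IsLub' {α : Type*} (le : α → α → Prop) (S : Set α) (a : α) : Prop :=
  (∀ s ∈ S, le s a) ∧ ∀ b, (∀ s ∈ S, le s b) → le a b

/-- `U` is Scott open: an upper set inaccessible by directed suprema. -/
def ScottOpen {α : Type*} (le : α → α → Prop) (U : Set α) : Prop :=
  (∀ x ∈ U, ∀ y, le x y → y ∈ U) ∧
  ∀ S : Set α, S.Nonempty → DirectedOn le S →
    ∀ a, IsLub' le S a → a ∈ U → (S ∩ U).Nonempty

/-- Shannon entropy (with the convention 0 · ln 0 = 0, as `Real.log 0 = 0`). -/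
noncomputable def shannonEntropy {n : ℕ} (x : ClState n) : ℝ :=
  -∑ i, x.val i * Real.log (x.val i)


namespace ShannonAux

/-- A pair of sorted extended sequences coming from comparable states. -/
structure SP (n : ℕ) (X Y : ℕ → ℝ) : Prop where
  antX : Antitone X
  antY : Antitone Y
  nnX : ∀ i, 0 ≤ X i
  nnY : ∀ i, 0 ≤ Y i
  zX : ∀ i, n ≤ i → X i = 0
  zY : ∀ i, n ≤ i → Y i = 0
  sX : ∑ i ∈ Finset.range n, X i = 1
  sY : ∑ i ∈ Finset.range n, Y i = 1
  cross : ∀ i, X i * Y (i + 1) ≤ X (i + 1) * Y i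

variable {n : ℕ} {X Y : ℕ → ℝ}

lemma SP.supp (h : SP n X Y) : ∀ i, X i = 0 → Y i = 0 := by
  classical
  intro i hi
  have hex : ∃ k, X k = 0 := ⟨i, hi⟩
  have hXm : X (Nat.find hex) = 0 := Nat.find_spec hex
  set m := Nat.find hex with hm
  have hmpos : m ≠ 0 := by
    intro h0
    have hall : ∀ k, X k = 0 := fun k =>
      le_antisymm (by simpa [h0 ▸ hXm] using h.antX (Nat.zero_le k)) (h.nnX k)
    have : (1 : ℝ) = 0 := by
      rw [← h.sX]; exact Finset.sum_eq_zero fun i _ => hall i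
    norm_num at this
  obtain ⟨k, hk⟩ := Nat.exists_eq_succ_of_ne_zero hmpos
  have hXk : 0 < X k :=
    lt_of_le_of_ne (h.nnX k) (Ne.symm (Nat.find_min hex (by omega)))
  have hYm : Y m = 0 := by
    have hc := h.cross k
    rw [← Nat.succ_eq_add_one, ← hk, hXm, zero_mul] at hc
    have : Y m ≤ 0 := nonpos_of_mul_nonpos_right ?_ hXk
    · exact le_antisymm this (h.nnY m)
    · exact hc
  have hmi : m ≤ i := Nat.find_le hi
  exact le_antisymm (hYm ▸ h.antY hmi) (h.nnY i)

lemma SP.cross_le (h : SP n X Y) : ∀ i j, i ≤ j → X i * Y j ≤ X j * Y i := by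
  intro i j hij
  induction j, hij using Nat.le_induction with
  | base => exact le_refl _
  | succ j hij IH =>
    rcases eq_or_lt_of_le (h.nnX j) with hXj | hXj
    · have hX1 : X (j + 1) = 0 :=
        le_antisymm (by simpa [← hXj] using h.antX (Nat.le_succ j)) (h.nnX (j+1))
      have hY1 : Y (j + 1) = 0 := h.supp _ hX1
      rw [hX1, hY1, mul_zero, zero_mul]
    rcases eq_or_lt_of_le (h.nnY j) with hYj | hYj
    · have hY1 : Y (j + 1) = 0 :=
        le_antisymm (by simpa [← hYj] using h.antY (Nat.le_succ j)) (h.nnY (j+1))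
      rw [hY1, mul_zero]
      exact mul_nonneg (h.nnX (j+1)) (h.nnY i)
    · have key : (X i * Y (j+1)) * (X j * Y j) ≤ (X (j+1) * Y i) * (X j * Y j) := by
        have h1 : X i * Y j ≤ X j * Y i := IH
        have h2 : X j * Y (j+1) ≤ X (j+1) * Y j := h.cross j
        have hmul := mul_le_mul h1 h2 (mul_nonneg (h.nnX j) (h.nnY (j+1)))
          (mul_nonneg (h.nnX j) (h.nnY i))
        nlinarith [hmul]
      exact le_of_mul_le_mul_right key (mul_pos hXj hYj)

lemma SP.partial_sum (h : SP n X Y) (k : ℕ) :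
    ∑ i ∈ Finset.range k, X i ≤ ∑ i ∈ Finset.range k, Y i := by
  rcases le_or_gt n k with hnk | hkn
  · have eX : ∑ i ∈ Finset.range k, X i = ∑ i ∈ Finset.range n, X i := by
      refine (Finset.sum_subset (Finset.range_subset_range.2 hnk) ?_).symm
      intro i _ hi
      exact h.zX i (by simpa using hi)
    have eY : ∑ i ∈ Finset.range k, Y i = ∑ i ∈ Finset.range n, Y i := by
      refine (Finset.sum_subset (Finset.range_subset_range.2 hnk) ?_).symm
      intro i _ hi
      exact h.zY i (by simpa using hi)
    rw [eX, eY, h.sX, h.sY]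
  · set A := ∑ i ∈ Finset.range k, X i with hA
    set B := ∑ i ∈ Finset.range k, Y i with hB
    have hsplitX : A + ∑ i ∈ Finset.Ico k n, X i = 1 := by
      rw [hA, Finset.sum_range_add_sum_Ico _ (le_of_lt hkn), h.sX]
    have hsplitY : B + ∑ i ∈ Finset.Ico k n, Y i = 1 := by
      rw [hB, Finset.sum_range_add_sum_Ico _ (le_of_lt hkn), h.sY]
    have key : A * ∑ j ∈ Finset.Ico k n, Y j ≤ (∑ j ∈ Finset.Ico k n, X j) * B := by
      rw [Finset.sum_mul_sum, Finset.sum_mul_sum]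
      rw [Finset.sum_comm (s := Finset.range k)]
      refine Finset.sum_le_sum fun j hj => Finset.sum_le_sum fun i hi => ?_
      have hik : i < k := Finset.mem_range.mp hi
      have hjk : k ≤ j := (Finset.mem_Ico.mp hj).1
      exact h.cross_le i j (by omega)
    have h1 : ∑ i ∈ Finset.Ico k n, Y i = 1 - B := by linarith
    have h2 : ∑ i ∈ Finset.Ico k n, X i = 1 - A := by linarith
    rw [h1, h2] at key
    nlinarith [key]

/-- pointwise concavity estimate for t ↦ -t log t -/
lemma negmullog_concave_bound {a b : ℝ} (ha : 0 < a) (hb : 0 ≤ b) :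
    -(b * Real.log b) ≤ -(a * Real.log a) - (Real.log a + 1) * (b - a) := by
  rcases eq_or_lt_of_le hb with hb0 | hb0
  · rw [← hb0]
    simp
    nlinarith [Real.log_le_sub_one_of_pos ha]
  · have hlog := Real.log_le_sub_one_of_pos (div_pos ha hb0)
    rw [Real.log_div (ne_of_gt ha) (ne_of_gt hb0)] at hlog
    have : b * (Real.log a - Real.log b) ≤ b * (a / b - 1) :=
      mul_le_mul_of_nonneg_left hlog hb
    have hba : b * (a / b - 1) = a - b := by field_simp
    rw [hba] at this
    nlinarith [this]

/-- Abel-summation positivity -/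
lemma abel_nonneg (c d : ℕ → ℝ) (m : ℕ)
    (hc : ∀ i j, i ≤ j → j < m → c j ≤ c i)
    (hD : ∀ k, 0 ≤ ∑ i ∈ Finset.range k, d i)
    (hDm : ∑ i ∈ Finset.range m, d i = 0) :
    0 ≤ ∑ i ∈ Finset.range m, c i * d i := by
  rcases Nat.eq_zero_or_pos m with hm | hm
  · simp [hm]
  have key : ∀ p, 0 < p → p ≤ m →
      c (p - 1) * ∑ i ∈ Finset.range p, d i ≤ ∑ i ∈ Finset.range p, c i * d i := by
    intro p hp hpm
    induction p with
    | zero => omega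
    | succ q IH =>
      rcases Nat.eq_zero_or_pos q with hq | hq
      · subst hq; simp
      · have IH' := IH hq (by omega)
        have hstep : c q ≤ c (q - 1) := hc (q - 1) q (by omega) (by omega)
        have hDq := hD q
        rw [Finset.sum_range_succ, Finset.sum_range_succ]
        have : c q * (∑ i ∈ Finset.range q, d i + d q)
            ≤ c (q - 1) * ∑ i ∈ Finset.range q, d i + c q * d q := by
          nlinarith [hDq, hstep]
        simpa using le_trans this (by linarith [IH'])
  have := key m hm le_rfl
  rw [hDm, mul_zero] at this
  exact this


/-- Entropy decreases along the Bayesian order, sequence version. -/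
lemma entropy_mono_seq (h : SP n X Y) :
    ∑ i ∈ Finset.range n, -(Y i * Real.log (Y i)) ≤
      ∑ i ∈ Finset.range n, -(X i * Real.log (X i)) := by
  classical
  have hex : ∃ k, X k = 0 := ⟨n, h.zX n le_rfl⟩
  set m := Nat.find hex with hm
  have hXm : X m = 0 := Nat.find_spec hex
  have hmn : m ≤ n := Nat.find_le (h.zX n le_rfl)
  have hXpos : ∀ i < m, 0 < X i := fun i hi =>
    lt_of_le_of_ne (h.nnX i) (Ne.symm (Nat.find_min hex hi))
  have hXz : ∀ i, m ≤ i → X i = 0 := fun i hi =>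
    le_antisymm (hXm ▸ h.antX hi) (h.nnX i)
  have hYz : ∀ i, m ≤ i → Y i = 0 := fun i hi => h.supp i (hXz i hi)
  -- step 1: pointwise bound
  have step1 : ∑ i ∈ Finset.range n, -(Y i * Real.log (Y i)) ≤
      ∑ i ∈ Finset.range n,
        (-(X i * Real.log (X i)) - (Real.log (X i) + 1) * (Y i - X i)) := by
    refine Finset.sum_le_sum fun i _ => ?_
    rcases lt_or_ge i m with him | him
    · exact negmullog_concave_bound (hXpos i him) (h.nnY i)
    · rw [hXz i him, hYz i him]
      simp
  -- step 2: split the sum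
  have hsum0 : ∑ i ∈ Finset.range n, (Y i - X i) = 0 := by
    rw [Finset.sum_sub_distrib, h.sX, h.sY, sub_self]
  have step2 : ∑ i ∈ Finset.range n,
      (-(X i * Real.log (X i)) - (Real.log (X i) + 1) * (Y i - X i)) =
      ∑ i ∈ Finset.range n, -(X i * Real.log (X i)) -
        ∑ i ∈ Finset.range n, Real.log (X i) * (Y i - X i) := by
    rw [Finset.sum_sub_distrib]
    congr 1
    have : ∀ i, (Real.log (X i) + 1) * (Y i - X i)
        = Real.log (X i) * (Y i - X i) + (Y i - X i) := fun i => by ring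
    rw [Finset.sum_congr rfl fun i _ => this i, Finset.sum_add_distrib, hsum0, add_zero]
  -- step 3: Abel positivity
  have step3 : 0 ≤ ∑ i ∈ Finset.range n, Real.log (X i) * (Y i - X i) := by
    have hrestrict : ∑ i ∈ Finset.range n, Real.log (X i) * (Y i - X i)
        = ∑ i ∈ Finset.range m, Real.log (X i) * (Y i - X i) := by
      refine (Finset.sum_subset (Finset.range_subset_range.2 hmn) ?_).symm
      intro i _ hi
      have him : m ≤ i := by simpa using hi
      rw [hYz i him, hXz i him]
      simp
    rw [hrestrict]
    refine abel_nonneg _ _ m ?_ ?_ ?_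
    · intro i j hij hjm
      exact Real.log_le_log (hXpos j hjm) (h.antX hij)
    · intro k
      have := h.partial_sum k
      rw [Finset.sum_sub_distrib]
      linarith
    · have : ∑ i ∈ Finset.range m, (Y i - X i)
          = ∑ i ∈ Finset.range n, (Y i - X i) := by
        refine Finset.sum_subset (Finset.range_subset_range.2 hmn) ?_
        intro i _ hi
        have him : m ≤ i := by simpa using hi
        rw [hYz i him, hXz i him, sub_self]
      rw [this, hsum0]
  calc ∑ i ∈ Finset.range n, -(Y i * Real.log (Y i))
      ≤ _ := step1
    _ = _ := step2
    _ ≤ ∑ i ∈ Finset.range n, -(X i * Real.log (X i)) := by linarith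

/-- constancy on positive ties -/
lemma const_on_ties (hX : Antitone X) (hY : Antitone Y)
    (hc : ∀ i, X i * Y (i + 1) ≤ X (i + 1) * Y i) :
    ∀ i j, i ≤ j → Y i = Y j → 0 < Y j → X i = X j := by
  intro i j hij
  induction j, hij using Nat.le_induction with
  | base => intro _ _; rfl
  | succ j hij IH =>
    intro hYij hpos
    have hYj : Y j = Y i := by
      have h1 : Y (j+1) ≤ Y j := hY (Nat.le_succ j)
      have h2 : Y j ≤ Y i := hY hij
      linarith [hYij ▸ h1, hYij ▸ h2]
    have hXij : X i = X j := IH hYj.symm (by rw [hYj, hYij]; exact hpos)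
    have hv : Y j = Y (j + 1) := by rw [hYj, hYij]
    have hcj := hc j
    rw [hv] at hcj
    have hle : X j ≤ X (j+1) := le_of_mul_le_mul_right hcj hpos
    rw [hXij, le_antisymm hle (hX (Nat.le_succ j))]

end ShannonAux

namespace ShannonAux

variable {n : ℕ}

/-- extension of a `Fin n` tuple by zeros -/
noncomputable def extSeq (n : ℕ) (f : Fin n → ℝ) : ℕ → ℝ :=
  fun i => if h : i < n then f ⟨i, h⟩ else 0

lemma extSeq_sum (f : Fin n → ℝ) :
    ∑ i ∈ Finset.range n, extSeq n f i = ∑ i, f i := by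
  rw [← Fin.sum_univ_eq_sum_range (fun i => extSeq n f i) n]
  exact Finset.sum_congr rfl fun i _ => by simp [extSeq, i.isLt]

lemma extSeq_antitone {f : Fin n → ℝ} (hf : ∀ i, 0 ≤ f i)
    (h : Antitone f) : Antitone (extSeq n f) := by
  intro i j hij
  by_cases hj : j < n
  · have hi : i < n := lt_of_le_of_lt hij hj
    simp only [extSeq, dif_pos hi, dif_pos hj]
    exact h (show (⟨i, hi⟩ : Fin n) ≤ ⟨j, hj⟩ from hij)
  · by_cases hi : i < n
    · simp only [extSeq, dif_pos hi, dif_neg hj]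
      exact hf _
    · simp [extSeq, dif_neg hi, dif_neg hj]

lemma extSeq_nonneg {f : Fin n → ℝ} (hf : ∀ i, 0 ≤ f i) :
    ∀ i, 0 ≤ extSeq n f i := by
  intro i
  by_cases hi : i < n <;> simp [extSeq, hi]
  exact hf _

lemma extSeq_zero (f : Fin n → ℝ) : ∀ i, n ≤ i → extSeq n f i = 0 := by
  intro i hi
  simp [extSeq, Nat.not_lt.mpr hi]

/-- Build the sequence pair from a Bayesian comparison of states. -/
lemma sp_of_clLE {x y : ClState n} (σ : Equiv.Perm (Fin n))
    (hx : Antitone (fun i => x.val (σ i))) (hy : Antitone (fun i => y.val (σ i)))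
    (hc : ∀ i j : Fin n, (i : ℕ) + 1 = (j : ℕ) →
      x.val (σ i) * y.val (σ j) ≤ x.val (σ j) * y.val (σ i)) :
    SP n (extSeq n (fun i => x.val (σ i))) (extSeq n (fun i => y.val (σ i))) := by
  have hxnn : ∀ i, 0 ≤ x.val (σ i) := fun i => x.prop.1 _
  have hynn : ∀ i, 0 ≤ y.val (σ i) := fun i => y.prop.1 _
  refine ⟨extSeq_antitone hxnn hx, extSeq_antitone hynn hy,
    extSeq_nonneg hxnn, extSeq_nonneg hynn, extSeq_zero _, extSeq_zero _, ?_, ?_, ?_⟩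
  · rw [extSeq_sum]
    rw [Equiv.sum_comp σ x.val]
    exact x.prop.2
  · rw [extSeq_sum]
    rw [Equiv.sum_comp σ y.val]
    exact y.prop.2
  · intro i
    by_cases h1 : i + 1 < n
    · have hi : i < n := by omega
      simp only [extSeq, dif_pos h1, dif_pos hi]
      exact hc ⟨i, hi⟩ ⟨i+1, h1⟩ rfl
    · by_cases hi : i < n
      · simp only [extSeq, dif_pos hi, dif_neg h1]
        simp
      · simp [extSeq, dif_neg h1, dif_neg hi]

/-- entropy via sorted extension -/
lemma entropy_eq_ext (x : ClState n) (σ : Equiv.Perm (Fin n)) :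
    shannonEntropy x = ∑ i ∈ Finset.range n,
      -(extSeq n (fun i => x.val (σ i)) i * Real.log (extSeq n (fun i => x.val (σ i)) i)) := by
  have hfin : ∀ i : Fin n, extSeq n (fun j => x.val (σ j)) (i : ℕ) = x.val (σ i) := by
    intro i; simp [extSeq, i.isLt]
  rw [← Fin.sum_univ_eq_sum_range
    (fun i => -(extSeq n (fun j => x.val (σ j)) i * Real.log (extSeq n (fun j => x.val (σ j)) i))) n]
  simp only [hfin]
  rw [shannonEntropy, ← Equiv.sum_comp σ (fun j => x.val j * Real.log (x.val j)), neg_eq_iff_eq_neg,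
    ← Finset.sum_neg_distrib]
  simp

/-- Part 1: entropy is antitone for the Bayesian order. -/
lemma entropy_mono {x y : ClState n} (h : clLE x y) :
    shannonEntropy y ≤ shannonEntropy x := by
  obtain ⟨σ, hx, hy, hc⟩ := h
  have hsp := sp_of_clLE σ hx hy hc
  have := entropy_mono_seq hsp
  rw [entropy_eq_ext x σ, entropy_eq_ext y σ]
  exact this

end ShannonAux

namespace ShannonAux
variable {n : ℕ}

lemma exists_antitone_sort (f : Fin n → ℝ) :
    ∃ σ : Equiv.Perm (Fin n), Antitone (fun i => f (σ i)) := by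
  refine ⟨Tuple.sort (fun i => OrderDual.toDual (f i)), ?_⟩
  intro i j hij
  exact Tuple.monotone_sort (fun i => OrderDual.toDual (f i)) hij

lemma clLE_refl (x : ClState n) : clLE x x := by
  obtain ⟨σ, hσ⟩ := exists_antitone_sort x.val
  exact ⟨σ, hσ, hσ, fun i j _ => le_of_eq (mul_comm _ _)⟩

lemma clLE_trans {x y z : ClState n} (hxy : clLE x y) (hyz : clLE y z) :
    clLE x z := by
  classical
  obtain ⟨σ, hxσ, hyσ, hc1⟩ := hxy
  obtain ⟨τ, hyτ, hzτ, hc2⟩ := hyz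
  have hEq : ∀ i, y.val (σ i) = y.val (τ i) := by
    have hu := Tuple.unique_monotone (f := fun i => OrderDual.toDual (y.val i))
      (σ := σ) (τ := τ) (fun i j hij => hyσ hij) (fun i j hij => hyτ hij)
    intro i
    exact congrFun hu i
  have hsp1 := sp_of_clLE σ hxσ hyσ hc1
  have hsp2 := sp_of_clLE τ hyτ hzτ hc2
  -- z vanishes wherever y vanishes
  have zzero : ∀ j : Fin n, y.val j = 0 → z.val j = 0 := by
    intro j hj
    have hi : y.val (τ (τ.symm j)) = 0 := by rwa [Equiv.apply_symm_apply]
    have hsupp := hsp2.supp ((τ.symm j) : ℕ)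
    have e1 : extSeq n (fun i => y.val (τ i)) ((τ.symm j) : ℕ) = y.val (τ (τ.symm j)) := by
      simp [extSeq, Fin.is_lt]
    have e2 : extSeq n (fun i => z.val (τ i)) ((τ.symm j) : ℕ) = z.val (τ (τ.symm j)) := by
      simp [extSeq, Fin.is_lt]
    have := hsupp (by rw [e1]; exact hi)
    rw [e2, Equiv.apply_symm_apply] at this
    exact this
  -- x is constant on positive ties of y (along σ)
  have factB : ∀ i j : Fin n, y.val (σ i) = y.val (σ j) → 0 < y.val (σ j) →
      x.val (σ i) = x.val (σ j) := by
    intro i j hyij hypos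
    have hct := const_on_ties (X := extSeq n (fun i => x.val (σ i)))
      (Y := extSeq n (fun i => y.val (σ i))) hsp1.antX hsp1.antY hsp1.cross
    have ei : ∀ k : Fin n, extSeq n (fun i => x.val (σ i)) (k : ℕ) = x.val (σ k) := by
      intro k; simp [extSeq, Fin.is_lt]
    have eyi : ∀ k : Fin n, extSeq n (fun i => y.val (σ i)) (k : ℕ) = y.val (σ k) := by
      intro k; simp [extSeq, Fin.is_lt]
    rcases le_total (i : ℕ) (j : ℕ) with hle | hle
    · have := hct i j hle (by rw [eyi, eyi]; exact hyij) (by rw [eyi]; exact hypos)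
      rwa [ei, ei] at this
    · have := hct j i hle (by rw [eyi, eyi]; exact hyij.symm)
        (by rw [eyi]; linarith [hyij, hypos])
      rw [ei, ei] at this
      exact this.symm
  -- the combined permutation
  have hinj : Function.Injective (fun i => if 0 < y.val (τ i) then τ i else σ i) := by
    intro i i' hii'
    simp only at hii'
    by_cases h1 : 0 < y.val (τ i) <;> by_cases h2 : 0 < y.val (τ i')
    · rw [if_pos h1, if_pos h2] at hii'; exact τ.injective hii'
    · rw [if_pos h1, if_neg h2] at hii'
      exfalso
      have hyi' : y.val (σ i') = 0 := by
        rw [hEq i']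
        exact le_antisymm (not_lt.mp h2) (y.prop.1 _)
      rw [← hii'] at hyi'
      exact absurd hyi' (ne_of_gt h1)
    · rw [if_neg h1, if_pos h2] at hii'
      exfalso
      have hyi : y.val (σ i) = 0 := by
        rw [hEq i]
        exact le_antisymm (not_lt.mp h1) (y.prop.1 _)
      rw [hii'] at hyi
      exact absurd hyi (ne_of_gt h2)
    · rw [if_neg h1, if_neg h2] at hii'; exact σ.injective hii'
  let ρ : Equiv.Perm (Fin n) :=
    Equiv.ofBijective _ (Finite.injective_iff_bijective.mp hinj)
  have hρdef : ∀ i, ρ i = if 0 < y.val (τ i) then τ i else σ i := fun i => rfl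
  have hyρ : ∀ i, y.val (ρ i) = y.val (σ i) := by
    intro i
    rw [hρdef]
    by_cases h1 : 0 < y.val (τ i)
    · rw [if_pos h1, hEq]
    · rw [if_neg h1]
  have hxρ : ∀ i, x.val (ρ i) = x.val (σ i) := by
    intro i
    rw [hρdef]
    by_cases h1 : 0 < y.val (τ i)
    · rw [if_pos h1]
      set i' := σ.symm (τ i) with hi'
      have hσi' : σ i' = τ i := Equiv.apply_symm_apply σ (τ i)
      have hyy : y.val (σ i') = y.val (σ i) := by rw [hσi', hEq]
      have := factB i' i (by rw [hyy]) (by rw [hEq]; exact h1)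
      rw [hσi'] at this
      exact this
    · rw [if_neg h1]
  have hzρ : ∀ i, z.val (ρ i) = z.val (τ i) := by
    intro i
    rw [hρdef]
    by_cases h1 : 0 < y.val (τ i)
    · rw [if_pos h1]
    · rw [if_neg h1]
      have hy0 : y.val (τ i) = 0 := le_antisymm (not_lt.mp h1) (y.prop.1 _)
      have hz1 : z.val (τ i) = 0 := zzero _ hy0
      have hz2 : z.val (σ i) = 0 := zzero _ (by rw [hEq]; exact hy0)
      rw [hz1, hz2]
  refine ⟨ρ, ?_, ?_, ?_⟩
  · intro i j hij
    simp only [hxρ]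
    exact hxσ hij
  · intro i j hij
    simp only [hzρ]
    exact hzτ hij
  · intro i j hij
    simp only [hxρ, hzρ]
    have hijle : i ≤ j := by
      rw [Fin.le_def]; omega
    by_cases hYj : 0 < y.val (σ j)
    · have hYi : 0 < y.val (σ i) := lt_of_lt_of_le hYj (hyσ hijle)
      have h1 := hc1 i j hij
      have h2 := hc2 i j hij
      rw [← hEq i, ← hEq j] at h2
      have hmul := mul_le_mul h1 h2
        (mul_nonneg (y.prop.1 _) (z.prop.1 _))
        (mul_nonneg (x.prop.1 _) (y.prop.1 _))
      have hkey : (x.val (σ i) * z.val (τ j)) * (y.val (σ i) * y.val (σ j)) ≤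
          (x.val (σ j) * z.val (τ i)) * (y.val (σ i) * y.val (σ j)) := by
        nlinarith [hmul]
      exact le_of_mul_le_mul_right hkey (mul_pos hYi hYj)
    · have hy0 : y.val (σ j) = 0 := le_antisymm (not_lt.mp hYj) (y.prop.1 _)
      have hz0 : z.val (τ j) = 0 := zzero _ (by rw [← hEq]; exact hy0)
      rw [hz0, mul_zero]
      exact mul_nonneg (x.prop.1 _) (z.prop.1 _)

end ShannonAux

namespace ShannonAux
variable {n : ℕ}

noncomputable instance : TopologicalSpace (ClState n) :=
  inferInstanceAs (TopologicalSpace {x : Fin n → ℝ // IsClassicalState n x})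

lemma coord_le_one (x : ClState n) (i : Fin n) : x.val i ≤ 1 := by
  have := Finset.single_le_sum (f := x.val) (fun j _ => x.prop.1 j) (Finset.mem_univ i)
  rw [x.prop.2] at this
  exact this

lemma isCompact_states : IsCompact {x : Fin n → ℝ | IsClassicalState n x} := by
  apply Metric.isCompact_of_isClosed_isBounded
  · have h1 : IsClosed {x : Fin n → ℝ | ∀ i, 0 ≤ x i} := by
      have : {x : Fin n → ℝ | ∀ i, 0 ≤ x i} = ⋂ i, {x | 0 ≤ x i} := by
        ext x; simp
      rw [this]
      exact isClosed_iInter fun i => isClosed_le continuous_const (continuous_apply i)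
    have h2 : IsClosed {x : Fin n → ℝ | ∑ i, x i = 1} :=
      isClosed_eq (by continuity) continuous_const
    have : {x : Fin n → ℝ | IsClassicalState n x}
        = {x | ∀ i, 0 ≤ x i} ∩ {x | ∑ i, x i = 1} := by
      ext x; exact Iff.rfl
    rw [this]
    exact h1.inter h2
  · apply Bornology.IsBounded.subset (Metric.isBounded_closedBall (x := (0 : Fin n → ℝ)) (r := 1))
    intro x hx
    rw [Metric.mem_closedBall, dist_pi_le_iff zero_le_one]
    intro i
    rw [Real.dist_eq]
    have h1 : 0 ≤ x i := hx.1 i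
    have h2 : x i ≤ 1 := by
      have := Finset.single_le_sum (f := x) (fun j _ => hx.1 j) (Finset.mem_univ i)
      rw [hx.2] at this
      exact this
    simp only [Pi.zero_apply, sub_zero]
    rw [abs_of_nonneg h1]
    exact h2

noncomputable instance : CompactSpace (ClState n) :=
  isCompact_iff_compactSpace.mp isCompact_states

lemma continuous_coord (i : Fin n) : Continuous (fun y : ClState n => y.val i) :=
  (continuous_apply i).comp continuous_subtype_val

lemma continuous_entropy : Continuous (shannonEntropy : ClState n → ℝ) := by
  unfold shannonEntropy
  apply Continuous.neg
  apply continuous_finset_sum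
  intro i _
  exact Real.continuous_mul_log.comp (continuous_coord i)

lemma isClosed_upset (s : ClState n) : IsClosed {y : ClState n | clLE s y} := by
  classical
  have hset : {y : ClState n | clLE s y} = ⋃ σ : Equiv.Perm (Fin n),
      {y | Antitone (fun i => s.val (σ i)) ∧ Antitone (fun i => y.val (σ i)) ∧
        ∀ i j : Fin n, (i : ℕ) + 1 = (j : ℕ) →
          s.val (σ i) * y.val (σ j) ≤ s.val (σ j) * y.val (σ i)} := by
    ext y
    simp only [Set.mem_setOf_eq, Set.mem_iUnion]
    exact Iff.rfl
  rw [hset]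
  apply isClosed_iUnion_of_finite
  intro σ
  by_cases hA : Antitone (fun i => s.val (σ i))
  · have : {y : ClState n | Antitone (fun i => s.val (σ i)) ∧ Antitone (fun i => y.val (σ i)) ∧
        ∀ i j : Fin n, (i : ℕ) + 1 = (j : ℕ) →
          s.val (σ i) * y.val (σ j) ≤ s.val (σ j) * y.val (σ i)}
        = {y : ClState n | Antitone (fun i => y.val (σ i))} ∩
          ⋂ (i : Fin n) (j : Fin n) (_ : (i : ℕ) + 1 = (j : ℕ)),
            {y : ClState n | s.val (σ i) * y.val (σ j) ≤ s.val (σ j) * y.val (σ i)} := by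
      ext y
      simp only [Set.mem_setOf_eq, Set.mem_inter_iff, Set.mem_iInter, hA, true_and]
    rw [this]
    apply IsClosed.inter
    · have : {y : ClState n | Antitone (fun i => y.val (σ i))}
          = ⋂ (i : Fin n) (j : Fin n) (_ : i ≤ j),
            {y : ClState n | y.val (σ j) ≤ y.val (σ i)} := by
        ext y
        simp only [Set.mem_setOf_eq, Set.mem_iInter]
        constructor
        · intro h i j hij; exact h hij
        · intro h i j hij; exact h i j hij
      rw [this]
      exact isClosed_iInter fun i => isClosed_iInter fun j => isClosed_iInter fun _ =>
        isClosed_le (continuous_coord _) (continuous_coord _)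
    · exact isClosed_iInter fun i => isClosed_iInter fun j => isClosed_iInter fun _ =>
        isClosed_le (continuous_const.mul (continuous_coord _)) (continuous_const.mul (continuous_coord _))
  · have : {y : ClState n | Antitone (fun i => s.val (σ i)) ∧ Antitone (fun i => y.val (σ i)) ∧
        ∀ i j : Fin n, (i : ℕ) + 1 = (j : ℕ) →
          s.val (σ i) * y.val (σ j) ≤ s.val (σ j) * y.val (σ i)} = ∅ := by
      ext y
      simp [hA]
    rw [this]
    exact isClosed_empty

end ShannonAux

namespace ShannonAux
variable {n : ℕ}

lemma part2 (S : Set (ClState n)) (hS : S.Nonempty) (hdir : DirectedOn clLE S)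
    (a : ClState n) (hlub : IsLub' clLE S a) :
    shannonEntropy a = sInf (shannonEntropy '' S) := by
  classical
  have himg : (shannonEntropy '' S).Nonempty := hS.image _
  have hlow : ∀ v ∈ shannonEntropy '' S, shannonEntropy a ≤ v := by
    rintro v ⟨s, hs, rfl⟩
    exact entropy_mono (hlub.1 s hs)
  have hbdd : BddBelow (shannonEntropy '' S) := ⟨shannonEntropy a, fun v hv => hlow v hv⟩
  haveI hne : Nonempty S := hS.to_subtype
  set T : S → Set (ClState n) := fun s => {y | y ∈ S ∧ clLE s.val y} with hT
  have hTne : ∀ s : S, (T s).Nonempty := fun s => ⟨s.val, s.prop, clLE_refl _⟩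
  have hdirF : Directed (· ≥ ·) (fun s : S => Filter.principal (T s)) := by
    intro s1 s2
    obtain ⟨s3, hs3S, h13, h23⟩ := hdir s1.val s1.prop s2.val s2.prop
    refine ⟨⟨s3, hs3S⟩, ?_, ?_⟩
    · show Filter.principal (T ⟨s3, hs3S⟩) ≤ Filter.principal (T s1)
      rw [Filter.principal_mono]
      rintro y ⟨hyS, hy⟩
      exact ⟨hyS, clLE_trans h13 hy⟩
    · show Filter.principal (T ⟨s3, hs3S⟩) ≤ Filter.principal (T s2)
      rw [Filter.principal_mono]
      rintro y ⟨hyS, hy⟩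
      exact ⟨hyS, clLE_trans h23 hy⟩
  set F : Filter (ClState n) := ⨅ s : S, Filter.principal (T s) with hF
  haveI hFne : F.NeBot :=
    Filter.iInf_neBot_of_directed' hdirF
      (fun s => Filter.principal_neBot_iff.mpr (hTne s))
  obtain ⟨p, hp⟩ := exists_clusterPt_of_compactSpace F
  have hmemcl : ∀ s : S, p ∈ closure (T s) := by
    intro s
    have hle : F ≤ Filter.principal (T s) := iInf_le _ s
    exact mem_closure_iff_clusterPt.mpr (hp.mono hle)
  have hub : ∀ s ∈ S, clLE s p := by
    intro s hs
    have hsub : closure (T ⟨s, hs⟩) ⊆ {y | clLE s y} :=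
      closure_minimal (fun y hy => hy.2) (isClosed_upset s)
    exact hsub (hmemcl ⟨s, hs⟩)
  have hpa : shannonEntropy p ≤ shannonEntropy a := entropy_mono (hlub.2 p hub)
  obtain ⟨s0, hs0⟩ := hS
  have hμp : shannonEntropy p ∈ closure (shannonEntropy '' S) := by
    have h1 : shannonEntropy p ∈ shannonEntropy '' closure (T ⟨s0, hs0⟩) :=
      ⟨p, hmemcl ⟨s0, hs0⟩, rfl⟩
    have h2 := image_closure_subset_closure_image (f := shannonEntropy)
      (s := T ⟨s0, hs0⟩) continuous_entropy h1
    exact closure_mono (Set.image_mono fun y hy => hy.1) h2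
  have hInfle : sInf (shannonEntropy '' S) ≤ shannonEntropy p := by
    have hsub : shannonEntropy '' S ⊆ Set.Ici (sInf (shannonEntropy '' S)) :=
      fun v hv => csInf_le hbdd hv
    exact closure_minimal hsub isClosed_Ici hμp
  exact le_antisymm (le_csInf himg hlow) (le_trans hInfle hpa)

end ShannonAux

namespace ShannonAux
variable {n : ℕ}

lemma pure_unique {x : ClState n} {j : Fin n} (hj : x.val j = 1) :
    ∀ i, i ≠ j → x.val i = 0 := by
  intro i hij
  have hsum := x.prop.2
  rw [← Finset.add_sum_erase _ _ (Finset.mem_univ j), hj] at hsum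
  have h1 : ∑ k ∈ Finset.univ.erase j, x.val k = 0 := by linarith
  exact (Finset.sum_eq_zero_iff_of_nonneg (fun k _ => x.prop.1 k)).mp h1 i
    (Finset.mem_erase.mpr ⟨hij, Finset.mem_univ i⟩)

lemma entropy_pure {x : ClState n} {j : Fin n} (hj : x.val j = 1) :
    shannonEntropy x = 0 := by
  rw [shannonEntropy, neg_eq_zero]
  apply Finset.sum_eq_zero
  intro i _
  by_cases hij : i = j
  · rw [hij, hj]; simp
  · rw [pure_unique hj i hij]; simp

lemma pure_of_entropy_zero {x : ClState n} (h : shannonEntropy x = 0) :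
    ∃ j, x.val j = 1 := by
  have hterm : ∀ i ∈ Finset.univ, x.val i * Real.log (x.val i) ≤ (0 : ℝ) := fun i _ =>
    mul_nonpos_of_nonneg_of_nonpos (x.prop.1 i)
      (Real.log_nonpos (x.prop.1 i) (coord_le_one x i))
  rw [shannonEntropy, neg_eq_zero] at h
  have hzero := (Finset.sum_eq_zero_iff_of_nonpos hterm).mp h
  have hx01 : ∀ i, x.val i = 0 ∨ x.val i = 1 := by
    intro i
    have hi := hzero i (Finset.mem_univ i)
    rcases mul_eq_zero.mp hi with h0 | hl
    · left; exact h0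
    · rcases Real.log_eq_zero.mp hl with h0 | h1 | hneg
      · left; exact h0
      · right; exact h1
      · exfalso; nlinarith [x.prop.1 i]
  by_contra hno
  push_neg at hno
  have hall : ∀ i, x.val i = 0 := fun i => (hx01 i).resolve_right (hno i)
  have hs := x.prop.2
  rw [Finset.sum_eq_zero (fun i _ => hall i)] at hs
  norm_num at hs

lemma pure_maximal (hn : 2 ≤ n) {x : ClState n} {j : Fin n} (hj : x.val j = 1)
    {y : ClState n} (h : clLE x y) : y = x := by
  obtain ⟨σ, hxσ, hyσ, hc⟩ := h
  set i0 : Fin n := ⟨0, by omega⟩ with hi0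
  set i1 : Fin n := ⟨1, by omega⟩ with hi1
  have hx0 : x.val (σ i0) = 1 := by
    have hle : x.val (σ (σ.symm j)) ≤ x.val (σ i0) := by
      apply hxσ
      exact Fin.mk_le_of_le_val (by omega)
    rw [Equiv.apply_symm_apply, hj] at hle
    exact le_antisymm (coord_le_one x _) hle
  have hσ0 : σ i0 = j := by
    by_contra hne
    rw [pure_unique hj _ hne] at hx0
    norm_num at hx0
  have hx1 : x.val (σ i1) = 0 := by
    apply pure_unique hj
    rw [← hσ0]
    intro heq
    have := σ.injective heq
    simp [hi0, hi1, Fin.ext_iff] at this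
  have hy1 : y.val (σ i1) = 0 := by
    have := hc i0 i1 (by simp [hi0, hi1])
    rw [hx0, hx1, one_mul, zero_mul] at this
    exact le_antisymm this (y.prop.1 _)
  have hyk : ∀ k : Fin n, k ≠ i0 → y.val (σ k) = 0 := by
    intro k hk
    have h1k : i1 ≤ k := by
      rw [Fin.le_def]
      have : (k : ℕ) ≠ 0 := fun h0 => hk (Fin.ext h0)
      simp [hi1]; omega
    exact le_antisymm (by simpa [hy1] using hyσ h1k) (y.prop.1 _)
  have hy0 : y.val (σ i0) = 1 := by
    have hsum : ∑ k, y.val (σ k) = 1 := by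
      rw [Equiv.sum_comp σ y.val]; exact y.prop.2
    rw [Finset.sum_eq_single_of_mem i0 (Finset.mem_univ i0)
      (fun k _ hk => hyk k hk)] at hsum
    exact hsum
  apply Subtype.ext
  funext i
  rcases eq_or_ne (σ.symm i) i0 with hcase | hcase
  · have : i = σ i0 := by rw [← hcase, Equiv.apply_symm_apply]
    rw [this, hy0, hx0]
  · have hiy : y.val i = 0 := by
      have := hyk (σ.symm i) hcase
      rwa [Equiv.apply_symm_apply] at this
    have hix : x.val i = 0 := by
      apply pure_unique hj
      rw [← hσ0]
      intro heq
      exact hcase (by rw [heq, Equiv.symm_apply_apply])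
    rw [hiy, hix]

lemma exists_pure_above (hn : 0 < n) (x : ClState n) :
    ∃ (y : ClState n) (j : Fin n), y.val j = 1 ∧ clLE x y := by
  classical
  obtain ⟨σ, hσ⟩ := exists_antitone_sort x.val
  set i0 : Fin n := ⟨0, hn⟩ with hi0
  set yv : Fin n → ℝ := fun i => if i = σ i0 then (1 : ℝ) else 0 with hyv
  have hstate : IsClassicalState n yv := by
    constructor
    · intro i
      by_cases h : i = σ i0 <;> simp [hyv, h]
    · simp [hyv]
  refine ⟨⟨yv, hstate⟩, σ i0, by simp [hyv], σ, hσ, ?_, ?_⟩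
  · intro i j hij
    simp only [hyv, Equiv.apply_eq_iff_eq]
    rcases eq_or_ne j i0 with hj | hj
    · have : i = i0 := by
        rw [hj] at hij
        exact le_antisymm hij (by rw [Fin.le_def]; simp [hi0])
      rw [hj, this]
    · rw [if_neg hj]
      by_cases hi : i = i0 <;> simp [hi]
  · intro i j hij
    have hj0 : σ j ≠ σ i0 := by
      intro h
      have hji := σ.injective h
      rw [hji, hi0] at hij
      simp at hij
    simp only [hyv, if_neg hj0]
    rw [mul_zero]
    apply mul_nonneg (x.prop.1 _)
    by_cases h : σ i = σ i0 <;> simp [h]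

end ShannonAux

namespace ShannonAux
variable {n : ℕ}

/-- the chain approaching the pure state at `j0` -/
noncomputable def stv (n : ℕ) (j0 : Fin n) (t : ℝ) : Fin n → ℝ :=
  fun i => if i = j0 then 1 - t + t / n else t / n

lemma stv_state (hn : 0 < n) (j0 : Fin n) {t : ℝ} (ht0 : 0 ≤ t) (ht1 : t ≤ 1) :
    IsClassicalState n (stv n j0 t) := by
  have hnR : (0:ℝ) < n := by exact_mod_cast hn
  have htn : 0 ≤ t / n := div_nonneg ht0 hnR.le
  constructor
  · intro i
    rcases eq_or_ne i j0 with h | h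
    · simp only [stv, if_pos h]; linarith
    · simp only [stv, if_neg h]; exact htn
  · have hsplit : ∀ i, stv n j0 t i = (if i = j0 then 1 - t else 0) + t / n := by
      intro i; rcases eq_or_ne i j0 with h | h <;> simp [stv, h]
    rw [Finset.sum_congr rfl fun i _ => hsplit i, Finset.sum_add_distrib]
    rw [Finset.sum_ite_eq' Finset.univ j0 (fun _ => 1 - t)]
    simp only [Finset.mem_univ, if_true, Finset.sum_const, Finset.card_univ,
      Fintype.card_fin, nsmul_eq_mul]
    field_simp
    ring

lemma stv_antitone (hn : 0 < n) (j0 : Fin n) {t : ℝ} (ht0 : 0 ≤ t) (ht1 : t ≤ 1)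
    {σ : Equiv.Perm (Fin n)} (hσ0 : σ ⟨0, hn⟩ = j0) :
    Antitone (fun i => stv n j0 t (σ i)) := by
  have hnR : (0:ℝ) < n := by exact_mod_cast hn
  have htn : 0 ≤ t / n := div_nonneg ht0 hnR.le
  intro i j hij
  simp only
  rcases eq_or_ne j ⟨0, hn⟩ with hj | hj
  · have hi : i = ⟨0, hn⟩ := by
      rw [hj] at hij
      exact le_antisymm hij (by rw [Fin.le_def]; simp)
    rw [hj, hi]
  · have hσj : σ j ≠ j0 := by
      rw [← hσ0]; exact fun h => hj (σ.injective h)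
    rw [stv, if_neg hσj]
    rcases eq_or_ne i ⟨0, hn⟩ with hi | hi
    · rw [hi, hσ0, stv, if_pos rfl]; linarith
    · have hσi : σ i ≠ j0 := by
        rw [← hσ0]; exact fun h => hi (σ.injective h)
      rw [stv, if_neg hσi]

lemma stv_chain (hn : 0 < n) (j0 : Fin n) {t t' : ℝ} (ht'0 : 0 ≤ t') (hle : t' ≤ t)
    (ht1 : t ≤ 1) : bayesLE (stv n j0 t) (stv n j0 t') := by
  have hnR : (0:ℝ) < n := by exact_mod_cast hn
  refine ⟨Equiv.swap ⟨0, hn⟩ j0, ?_, ?_, ?_⟩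
  · exact stv_antitone hn j0 (le_trans ht'0 hle) ht1 (Equiv.swap_apply_left _ _)
  · exact stv_antitone hn j0 ht'0 (le_trans hle ht1) (Equiv.swap_apply_left _ _)
  · intro i j hij
    set σ := Equiv.swap (⟨0, hn⟩ : Fin n) j0 with hσ
    have hσ0 : σ ⟨0, hn⟩ = j0 := Equiv.swap_apply_left _ _
    have hj : j ≠ ⟨0, hn⟩ := by
      intro h; rw [h] at hij; simp at hij
    have hσj : σ j ≠ j0 := by
      rw [← hσ0]; exact fun h => hj (σ.injective h)
    rcases eq_or_ne i ⟨0, hn⟩ with hi | hi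
    · rw [hi, hσ0]
      simp only [stv, if_neg hσj, eq_self_iff_true, if_true]
      have hkey : t / ↑n * (1 - t' + t' / ↑n) - (1 - t + t / ↑n) * (t' / ↑n)
          = (t - t') / ↑n := by field_simp; ring
      have hpos : 0 ≤ (t - t') / ↑n := div_nonneg (by linarith) hnR.le
      linarith
    · have hσi : σ i ≠ j0 := by
        rw [← hσ0]; exact fun h => hi (σ.injective h)
      simp only [stv, if_neg hσi, if_neg hσj]
      ring_nf
      exact le_refl _

lemma stv_le_pure (hn : 0 < n) {x : ClState n} {j0 : Fin n} (hj : x.val j0 = 1)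
    {t : ℝ} (ht0 : 0 ≤ t) (ht1 : t ≤ 1) : bayesLE (stv n j0 t) x.val := by
  have hnR : (0:ℝ) < n := by exact_mod_cast hn
  refine ⟨Equiv.swap ⟨0, hn⟩ j0, ?_, ?_, ?_⟩
  · exact stv_antitone hn j0 ht0 ht1 (Equiv.swap_apply_left _ _)
  · set σ := Equiv.swap (⟨0, hn⟩ : Fin n) j0 with hσ
    have hσ0 : σ ⟨0, hn⟩ = j0 := Equiv.swap_apply_left _ _
    intro i j hij
    simp only
    rcases eq_or_ne j ⟨0, hn⟩ with hj' | hj'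
    · have hi : i = ⟨0, hn⟩ := by
        rw [hj'] at hij
        exact le_antisymm hij (by rw [Fin.le_def]; simp)
      rw [hj', hi]
    · have hσj : σ j ≠ j0 := by
        rw [← hσ0]; exact fun h => hj' (σ.injective h)
      rw [pure_unique hj _ hσj]
      exact x.prop.1 _
  · set σ := Equiv.swap (⟨0, hn⟩ : Fin n) j0 with hσ
    have hσ0 : σ ⟨0, hn⟩ = j0 := Equiv.swap_apply_left _ _
    intro i j hij
    have hjne : j ≠ ⟨0, hn⟩ := by
      intro h; rw [h] at hij; simp at hij
    have hσj : σ j ≠ j0 := by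
      rw [← hσ0]; exact fun h => hjne (σ.injective h)
    rw [pure_unique hj _ hσj, mul_zero]
    exact mul_nonneg ((stv_state hn j0 ht0 ht1).1 _) (x.prop.1 _)

end ShannonAux

namespace ShannonAux
variable {n : ℕ}

lemma sort_top (hn : 0 < n) {x y : ClState n} {j0 : Fin n} (hj : x.val j0 = 1)
    (h : clLE y x) :
    ∃ σ : Equiv.Perm (Fin n), σ ⟨0, hn⟩ = j0 ∧ Antitone (fun i => y.val (σ i)) := by
  obtain ⟨σ, hyσ, hxσ, _⟩ := h
  have hx0 : x.val (σ ⟨0, hn⟩) = 1 := by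
    have hle : x.val (σ (σ.symm j0)) ≤ x.val (σ ⟨0, hn⟩) :=
      hxσ (by rw [Fin.le_def]; simp)
    rw [Equiv.apply_symm_apply, hj] at hle
    exact le_antisymm (coord_le_one x _) hle
  have hσ0 : σ ⟨0, hn⟩ = j0 := by
    by_contra hne
    rw [pure_unique hj _ hne] at hx0
    norm_num at hx0
  exact ⟨σ, hσ0, hyσ⟩

lemma entropy_ge (y : ClState n) {c : ℝ} (hc : ∀ i, y.val i ≤ c) (hcpos : 0 < c) :
    -Real.log c ≤ shannonEntropy y := by
  rw [shannonEntropy]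
  have h1 : ∑ i, y.val i * Real.log (y.val i) ≤ ∑ i, y.val i * Real.log c := by
    refine Finset.sum_le_sum fun i _ => ?_
    rcases eq_or_lt_of_le (y.prop.1 i) with h0 | h0
    · rw [← h0]; simp
    · exact mul_le_mul_of_nonneg_left (Real.log_le_log h0 (hc i)) (y.prop.1 i)
  have h2 : ∑ i, y.val i * Real.log c = Real.log c := by
    rw [← Finset.sum_mul, y.prop.2, one_mul]
  linarith

lemma stv_le_of_max (hn : 0 < n) {j0 : Fin n} {t : ℝ} (ht0 : 0 ≤ t) (ht1 : t ≤ 1)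
    (hn1 : 1 < n)
    (y : ClState n) (σ : Equiv.Perm (Fin n)) (hσ0 : σ ⟨0, hn⟩ = j0)
    (hanti : Antitone (fun i => y.val (σ i)))
    (hkey : (1 - t + t / n) * y.val (σ ⟨1, hn1⟩) ≤ t / n * y.val j0) :
    bayesLE (stv n j0 t) y.val := by
  have hnR : (0:ℝ) < n := by exact_mod_cast hn
  refine ⟨σ, stv_antitone hn j0 ht0 ht1 hσ0, hanti, ?_⟩
  intro i j hij
  have hjne : j ≠ ⟨0, hn⟩ := fun h => by rw [h] at hij; simp at hij
  have hσj : σ j ≠ j0 := by rw [← hσ0]; exact fun h => hjne (σ.injective h)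
  rcases eq_or_ne i ⟨0, hn⟩ with hi | hi
  · rw [hi, hσ0]
    simp only [stv, if_neg hσj, eq_self_iff_true, if_true]
    have h1j : (⟨1, hn1⟩ : Fin n) ≤ j := by
      rw [Fin.le_def]
      have hjv : (j : ℕ) ≠ 0 := fun h => hjne (Fin.ext h)
      show 1 ≤ (j : ℕ)
      omega
    have hyj : y.val (σ j) ≤ y.val (σ ⟨1, hn1⟩) := hanti h1j
    have hnn : (0:ℝ) ≤ 1 - t + t / n := by
      have : (0:ℝ) ≤ t / n := div_nonneg ht0 hnR.le
      linarith
    calc (1 - t + t/(n:ℝ)) * y.val (σ j)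
        ≤ (1 - t + t/(n:ℝ)) * y.val (σ ⟨1, hn1⟩) := mul_le_mul_of_nonneg_left hyj hnn
      _ ≤ t/(n:ℝ) * y.val j0 := hkey
  · have hσi : σ i ≠ j0 := by rw [← hσ0]; exact fun h => hi (σ.injective h)
    simp only [stv, if_neg hσi, if_neg hσj]
    have hle : i ≤ j := by rw [Fin.le_def]; omega
    exact mul_le_mul_of_nonneg_left (hanti hle) (div_nonneg ht0 hnR.le)

lemma stv_lub (hn2 : 2 ≤ n) {x : ClState n} {j0 : Fin n} (hj : x.val j0 = 1)
    (b : ClState n)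
    (hb : ∀ t : ℝ, 0 < t → t < 1 → bayesLE (stv n j0 t) b.val) : b = x := by
  have hn : 0 < n := by omega
  have hn1 : 1 < n := by omega
  have hnR : (0:ℝ) < n := by exact_mod_cast hn
  have hbound : ∀ i : Fin n, i ≠ j0 → ∀ t : ℝ, 0 < t → t ≤ 1/2 → b.val i ≤ 2 * t := by
    intro i hi t ht0 ht12
    obtain ⟨σ, hsσ, hbσ, hc⟩ := hb t ht0 (by linarith)
    have hσ0 : σ ⟨0, hn⟩ = j0 := by
      by_contra hne
      have h1 : stv n j0 t (σ ⟨0, hn⟩) = t / n := by simp only [stv, if_neg hne]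
      have h2 : stv n j0 t (σ (σ.symm j0)) ≤ stv n j0 t (σ ⟨0, hn⟩) :=
        hsσ (by rw [Fin.le_def]; simp)
      rw [Equiv.apply_symm_apply] at h2
      have h3 : stv n j0 t j0 = 1 - t + t / n := by simp [stv]
      rw [h1, h3] at h2
      have htn : t / n ≤ t := div_le_self ht0.le (by exact_mod_cast hn)
      linarith
    have hcross := hc ⟨0, hn⟩ ⟨1, hn1⟩ rfl
    rw [hσ0] at hcross
    have hσ1 : σ ⟨1, hn1⟩ ≠ j0 := by
      rw [← hσ0]
      intro h
      have := σ.injective h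
      simp [Fin.ext_iff] at this
    have hv0 : stv n j0 t j0 = 1 - t + t / n := by simp [stv]
    have hv1 : stv n j0 t (σ ⟨1, hn1⟩) = t / n := by simp only [stv, if_neg hσ1]
    rw [hv0, hv1] at hcross
    have hbi : b.val i ≤ b.val (σ ⟨1, hn1⟩) := by
      have hki : σ.symm i ≠ ⟨0, hn⟩ := by
        intro h
        apply hi
        rw [← Equiv.apply_symm_apply σ i, h, hσ0]
      have h1k : (⟨1, hn1⟩ : Fin n) ≤ σ.symm i := by
        rw [Fin.le_def]
        have hv : ((σ.symm i : Fin n) : ℕ) ≠ 0 := fun h => hki (Fin.ext h)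
        show 1 ≤ ((σ.symm i : Fin n) : ℕ)
        omega
      have := hbσ h1k
      simpa [Equiv.apply_symm_apply] using this
    have hbj0 : b.val j0 ≤ 1 := coord_le_one b j0
    have hnn : 1/2 ≤ 1 - t + t / n := by
      have : (0:ℝ) ≤ t / n := div_nonneg ht0.le hnR.le
      linarith
    have h4 : (1 - t + t/(n:ℝ)) * b.val i ≤ t / n * b.val j0 :=
      calc (1 - t + t/(n:ℝ)) * b.val i
          ≤ (1 - t + t/(n:ℝ)) * b.val (σ ⟨1, hn1⟩) :=
            mul_le_mul_of_nonneg_left hbi (by linarith)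
        _ ≤ t/(n:ℝ) * b.val j0 := hcross
    have h5 : t / (n:ℝ) * b.val j0 ≤ t :=
      calc t/(n:ℝ) * b.val j0 ≤ t/(n:ℝ) * 1 :=
            mul_le_mul_of_nonneg_left hbj0 (div_nonneg ht0.le hnR.le)
        _ = t/(n:ℝ) := mul_one _
        _ ≤ t := div_le_self ht0.le (by exact_mod_cast hn)
    nlinarith [h4, h5, hnn, b.prop.1 i,
      mul_nonneg (by linarith : (0:ℝ) ≤ 1 - t + t/(n:ℝ) - 1/2) (b.prop.1 i)]
  have hzero : ∀ i : Fin n, i ≠ j0 → b.val i = 0 := by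
    intro i hi
    by_contra hne
    have hpos : 0 < b.val i := lt_of_le_of_ne (b.prop.1 i) (Ne.symm hne)
    have ht := hbound i hi (min (1/4) (b.val i / 4)) (by positivity)
      (le_trans (min_le_left _ _) (by norm_num))
    have hm : min (1/4 : ℝ) (b.val i / 4) ≤ b.val i / 4 := min_le_right _ _
    linarith
  have hbj : b.val j0 = 1 := by
    have hsum := b.prop.2
    rw [Finset.sum_eq_single_of_mem j0 (Finset.mem_univ j0)
      (fun k _ hk => hzero k hk)] at hsum
    exact hsum
  apply Subtype.ext
  funext i
  rcases eq_or_ne i j0 with h | h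
  · rw [h, hbj, hj]
  · rw [hzero i h, pure_unique hj i h]

end ShannonAux

/-- Shannon entropy is a measurement Δⁿ → [0,∞)*: Scott continuous, its kernel is
exactly the maximal (pure) states, and it measures the content of every pure state. -/
theorem shannon_entropy_measurement (n : ℕ) (hn : 2 ≤ n) :
    (∀ x y : ClState n, clLE x y → shannonEntropy y ≤ shannonEntropy x) ∧
    (∀ S : Set (ClState n), S.Nonempty → DirectedOn clLE S →
      ∀ a : ClState n, IsLub' clLE S a →
        shannonEntropy a = sInf (shannonEntropy '' S)) ∧
    (∀ x : ClState n, shannonEntropy x = 0 ↔ (∀ y, clLE x y → y = x)) ∧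
    (∀ x : ClState n, (∃ i, x.val i = 1) →
      ∀ U : Set (ClState n), ScottOpen clLE U → x ∈ U →
        ∃ ε > (0 : ℝ), {y : ClState n | clLE y x ∧ shannonEntropy y < ε} ⊆ U) := by
  classical
  have hn0 : 0 < n := by omega
  have hn1 : 1 < n := by omega
  have hnR : (0:ℝ) < n := by exact_mod_cast hn0
  refine ⟨fun x y h => ShannonAux.entropy_mono h,
    fun S hS hdir a hlub => ShannonAux.part2 S hS hdir a hlub, ?_, ?_⟩
  · intro x
    constructor
    · intro h0 y hxy
      obtain ⟨j, hj⟩ := ShannonAux.pure_of_entropy_zero h0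
      exact ShannonAux.pure_maximal hn hj hxy
    · intro hmax
      obtain ⟨y, j, hj, hxy⟩ := ShannonAux.exists_pure_above hn0 x
      have hyx : y = x := hmax y hxy
      rw [← hyx]
      exact ShannonAux.entropy_pure hj
  · rintro x ⟨j0, hj0⟩ U hU hxU
    set S : Set (ClState n) :=
      {y : ClState n | ∃ t : ℝ, 0 < t ∧ t < 1 ∧ y.val = ShannonAux.stv n j0 t} with hSdef
    have hSne : S.Nonempty := by
      refine ⟨⟨ShannonAux.stv n j0 (1/2),
        ShannonAux.stv_state hn0 j0 (by norm_num) (by norm_num)⟩,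
        ⟨1/2, by norm_num, by norm_num, rfl⟩⟩
    have hdir : DirectedOn clLE S := by
      rintro y1 ⟨t1, ht1a, ht1b, hv1⟩ y2 ⟨t2, ht2a, ht2b, hv2⟩
      set t3 := min t1 t2 with ht3
      have ht3a : 0 < t3 := lt_min ht1a ht2a
      have ht3b : t3 < 1 := lt_of_le_of_lt (min_le_left _ _) ht1b
      refine ⟨⟨ShannonAux.stv n j0 t3, ShannonAux.stv_state hn0 j0 ht3a.le ht3b.le⟩,
        ⟨t3, ht3a, ht3b, rfl⟩, ?_, ?_⟩
      · show bayesLE y1.val _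
        rw [hv1]
        exact ShannonAux.stv_chain hn0 j0 ht3a.le (min_le_left _ _) ht1b.le
      · show bayesLE y2.val _
        rw [hv2]
        exact ShannonAux.stv_chain hn0 j0 ht3a.le (min_le_right _ _) ht2b.le
    have hlub : IsLub' clLE S x := by
      constructor
      · rintro s ⟨t, ht0, ht1, hv⟩
        show bayesLE s.val x.val
        rw [hv]
        exact ShannonAux.stv_le_pure hn0 hj0 ht0.le ht1.le
      · intro b hbub
        have hb : ∀ t : ℝ, 0 < t → t < 1 → bayesLE (ShannonAux.stv n j0 t) b.val := by
          intro t ht0 ht1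
          exact hbub ⟨ShannonAux.stv n j0 t, ShannonAux.stv_state hn0 j0 ht0.le ht1.le⟩
            ⟨t, ht0, ht1, rfl⟩
        have hbx : b = x := ShannonAux.stv_lub hn hj0 b hb
        rw [hbx]
        exact ShannonAux.clLE_refl x
    obtain ⟨s, hsS, hsU⟩ := hU.2 S hSne hdir x hlub hxU
    obtain ⟨t0, ht00, ht01, hsv⟩ := hsS
    have htn : 0 < t0 / (n:ℝ) := div_pos ht00 hnR
    refine ⟨Real.log (1 + t0 / n), Real.log_pos (by linarith), ?_⟩
    rintro y ⟨hyx, hyε⟩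
    obtain ⟨σ, hσ0, hyanti⟩ := ShannonAux.sort_top hn0 hj0 hyx
    have hymax : ∀ i, y.val i ≤ y.val j0 := by
      intro i
      have h0k : (⟨0, hn0⟩ : Fin n) ≤ σ.symm i := by rw [Fin.le_def]; simp
      have := hyanti h0k
      simpa [Equiv.apply_symm_apply, hσ0] using this
    have hjpos : 0 < y.val j0 := by
      have h1 : ∑ i, y.val i ≤ ∑ _i : Fin n, y.val j0 :=
        Finset.sum_le_sum fun i _ => hymax i
      rw [y.prop.2, Finset.sum_const, Finset.card_univ, Fintype.card_fin,
        nsmul_eq_mul] at h1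
      nlinarith [h1, hnR]
    set c : ℝ := 1 + t0 / n with hc
    have hcpos : (0:ℝ) < c := by rw [hc]; linarith
    have hyc : c⁻¹ < y.val j0 := by
      have h1 : -Real.log (y.val j0) ≤ shannonEntropy y :=
        ShannonAux.entropy_ge y hymax hjpos
      have h2 : -Real.log (y.val j0) < Real.log c := lt_of_le_of_lt h1 hyε
      have h3 : Real.log c⁻¹ < Real.log (y.val j0) := by
        rw [Real.log_inv]; linarith
      by_contra hle
      push_neg at hle
      exact absurd h3 (not_lt.mpr (Real.log_le_log hjpos hle))
    have hσ1 : σ ⟨1, hn1⟩ ≠ j0 := by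
      rw [← hσ0]
      intro h
      have := σ.injective h
      simp [Fin.ext_iff] at this
    have hpair : y.val (σ ⟨1, hn1⟩) ≤ 1 - y.val j0 := by
      have hsum : y.val j0 + y.val (σ ⟨1, hn1⟩) ≤ ∑ i, y.val i := by
        rw [← Finset.sum_pair (Ne.symm hσ1)]
        exact Finset.sum_le_sum_of_subset_of_nonneg (Finset.subset_univ _)
          (fun i _ _ => y.prop.1 i)
      rw [y.prop.2] at hsum
      linarith
    have hkey : (1 - t0 + t0/(n:ℝ)) * y.val (σ ⟨1, hn1⟩) ≤ t0/(n:ℝ) * y.val j0 := by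
      have hA : (1 - t0 + t0/(n:ℝ)) ≤ 1 := by
        have : t0/(n:ℝ) ≤ t0 := div_le_self ht00.le (by exact_mod_cast hn0)
        linarith
      have hB : (1 - t0 + t0/(n:ℝ)) * y.val (σ ⟨1, hn1⟩) ≤ 1 - y.val j0 := by
        calc (1 - t0 + t0/(n:ℝ)) * y.val (σ ⟨1, hn1⟩)
            ≤ 1 * y.val (σ ⟨1, hn1⟩) := mul_le_mul_of_nonneg_right hA (y.prop.1 _)
          _ = y.val (σ ⟨1, hn1⟩) := one_mul _
          _ ≤ 1 - y.val j0 := hpair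
      have hC : 1 ≤ c * y.val j0 := by
        have hmul := mul_le_mul_of_nonneg_left hyc.le hcpos.le
        rw [mul_inv_cancel₀ (ne_of_gt hcpos)] at hmul
        exact hmul
      have hcc : c * y.val j0 = y.val j0 + t0/(n:ℝ) * y.val j0 := by
        rw [hc]; ring
      rw [hcc] at hC
      linarith
    have hfin : clLE s y := by
      show bayesLE s.val y.val
      rw [hsv]
      exact ShannonAux.stv_le_of_max hn0 ht00.le ht01.le hn1 y σ hσ0 hyanti hkey
    exact hU.1 s hsU y hfin
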